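/- The symmetric group S₄ on 4 letters admits a spherical system of generators of signature (3,4,4): there exist permutations g₁, g₂, g₃ in Equiv.Perm (Fin 4) with orderOf g₁ = 3, orderOf g₂ = 4, orderOf g₃ = 4, g₁·g₂·g₃ = 1, which generate the whole symmetric group on Fin 4. -/

import Mathlib

private def a : Equiv.Perm (Fin 4) := Equiv.swap 0 1 * Equiv.swap 1 2
private def b : Equiv.Perm (Fin 4) := Equiv.swap 0 1 * Equiv.swap 1 2 * Equiv.swap 2 3

private lemma hb_cycle : b.IsCycle := by
  refine ⟨0, by decide, fun y hy => ?_⟩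
  fin_cases y
  · exact ⟨0, by decide⟩
  · exact ⟨1, by decide⟩
  · exact ⟨2, by decide⟩
  · exact ⟨3, by decide⟩

/-- The symmetric group `S₄` admits a spherical system of generators of
signature `(3,4,4)`: permutations `g₁, g₂, g₃` of orders `3, 4, 4` with
`g₁g₂g₃ = 1` generating the whole symmetric group. -/
theorem S4_spherical_system_344 :
    ∃ g₁ g₂ g₃ : Equiv.Perm (Fin 4),
      orderOf g₁ = 3 ∧ orderOf g₂ = 4 ∧ orderOf g₃ = 4 ∧
      g₁ * g₂ * g₃ = 1 ∧
      Subgroup.closure ({g₁, g₂, g₃} : Set (Equiv.Perm (Fin 4))) = ⊤ := by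
  refine ⟨a, b, (a * b)⁻¹, ?_, ?_, ?_, by group, ?_⟩
  · rw [orderOf_eq_iff (by norm_num)]
    exact ⟨by decide, by decide⟩
  · rw [orderOf_eq_iff (by norm_num)]
    exact ⟨by decide, by decide⟩
  · rw [orderOf_eq_iff (by norm_num)]
    exact ⟨by set_option maxRecDepth 10000 in decide, by decide⟩
  · have hs : b.support = ⊤ := by decide
    have key := Equiv.Perm.closure_cycle_adjacent_swap hb_cycle hs 2
    have hswap : Equiv.swap (2 : Fin 4) (b 2) = a⁻¹ * b := by decide
    rw [eq_top_iff, ← key]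
    refine (Subgroup.closure_le _).mpr ?_
    rintro x (rfl | rfl)
    · exact Subgroup.subset_closure (by simp)
    · rw [hswap]
      exact mul_mem (inv_mem (Subgroup.subset_closure (by simp)))
        (Subgroup.subset_closure (by simp))
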